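/- Let ξ, ζ : ℝ^d → ℝ^d be Borel maps and x̄ ∈ ℝ^d with ξ(x̄) ≠ ζ(x̄). Set μ = ν = δ_{x̄}. Then for every Borel selection s of the 1-duality map j₁ with |s(0)| < 1, liminf_{h→0⁺} (1/h)( W₁((Id + hξ)♯μ, (Id + hζ)♯ν) − W₁(μ,ν) − h ⟨ξ(x̄) − ζ(x̄), s(0)⟩ ) = |ξ(x̄) − ζ(x̄)| − ⟨ξ(x̄) − ζ(x̄), s(0)⟩ > 0. -/
import Mathlib


open MeasureTheory Filter
open scoped RealInnerProductSpace Topology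

/-- The 1-Wasserstein distance: the infimum over couplings `γ` of `μ` and `ν` of
`∫ dist(x, y) dγ(x, y)`. -/
noncomputable def W1 {E : Type*} [MeasurableSpace E] [MetricSpace E]
    (μ ν : Measure E) : ℝ :=
  sInf { r | ∃ γ : Measure (E × E), IsProbabilityMeasure γ ∧
    γ.map Prod.fst = μ ∧ γ.map Prod.snd = ν ∧ r = ∫ p, dist p.1 p.2 ∂γ }

lemma W1_dirac {E : Type*} [MeasurableSpace E] [MetricSpace E] [OpensMeasurableSpace E]
    (a b : E) : W1 (Measure.dirac a) (Measure.dirac b) = dist a b := by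
  unfold W1
  have hset : { r | ∃ γ : Measure (E × E), IsProbabilityMeasure γ ∧
      γ.map Prod.fst = Measure.dirac a ∧ γ.map Prod.snd = Measure.dirac b ∧
      r = ∫ p, dist p.1 p.2 ∂γ } = {dist a b} := by
    ext r
    simp only [Set.mem_setOf_eq, Set.mem_singleton_iff]
    constructor
    · rintro ⟨γ, hγ, hf, hg, rfl⟩
      have h1 : γ {p : E × E | p.1 ≠ a} = 0 := by
        have : γ (Prod.fst ⁻¹' {a}ᶜ) = 0 := by
          rw [← Measure.map_apply measurable_fst (measurableSet_singleton a).compl, hf]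
          simp
        simpa [Set.preimage] using this
      have h2 : γ {p : E × E | p.2 ≠ b} = 0 := by
        have : γ (Prod.snd ⁻¹' {b}ᶜ) = 0 := by
          rw [← Measure.map_apply measurable_snd (measurableSet_singleton b).compl, hg]
          simp
        simpa [Set.preimage] using this
      have hae : ∀ᵐ p ∂γ, p = (a, b) := by
        have hae1 : ∀ᵐ p : E × E ∂γ, p.1 = a := by rw [ae_iff]; simpa using h1
        have hae2 : ∀ᵐ p : E × E ∂γ, p.2 = b := by rw [ae_iff]; simpa using h2
        filter_upwards [hae1, hae2] with p h1 h2
        exact Prod.ext h1 h2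
      have : ∫ p, dist p.1 p.2 ∂γ = ∫ _p, dist a b ∂γ := by
        apply integral_congr_ae
        filter_upwards [hae] with p hp; rw [hp]
      rw [this, integral_const]; simp
    · rintro rfl
      refine ⟨Measure.dirac (a, b), inferInstance, ?_, ?_, ?_⟩
      · rw [Measure.map_dirac' measurable_fst]
      · rw [Measure.map_dirac' measurable_snd]
      · rw [integral_dirac]
  rw [hset, csInf_singleton]

theorem stmt8 {d : ℕ} (ξ ζ : EuclideanSpace ℝ (Fin d) → EuclideanSpace ℝ (Fin d))
    (hξ : Measurable ξ) (hζ : Measurable ζ)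
    (xb : EuclideanSpace ℝ (Fin d)) (hne : ξ xb ≠ ζ xb)
    (s : EuclideanSpace ℝ (Fin d) → EuclideanSpace ℝ (Fin d)) (hs : Measurable s)
    (hsel₁ : ∀ z, z ≠ 0 → s z = ‖z‖⁻¹ • z)
    (hsel₂ : ‖s 0‖ ≤ 1) (hs0 : ‖s 0‖ < 1) :
    (Filter.liminf
        (fun h : ℝ =>
          (1 / h) *
            (W1 ((Measure.dirac xb).map (fun x => x + h • ξ x))
                ((Measure.dirac xb).map (fun x => x + h • ζ x)) -
              W1 (Measure.dirac xb) (Measure.dirac xb) -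
              h * ⟪ξ xb - ζ xb, s 0⟫))
        (𝓝[>] (0 : ℝ))) =
      ‖ξ xb - ζ xb‖ - ⟪ξ xb - ζ xb, s 0⟫ ∧
    0 < ‖ξ xb - ζ xb‖ - ⟪ξ xb - ζ xb, s 0⟫ := by
  set v := ξ xb - ζ xb with hv
  set c : ℝ := ‖v‖ - ⟪v, s 0⟫ with hc
  have hvne : v ≠ 0 := sub_ne_zero.mpr hne
  have hpos : 0 < c := by
    have h1 : ⟪v, s 0⟫ ≤ ‖v‖ * ‖s 0‖ := real_inner_le_norm v (s 0)
    have h2 : 0 < ‖v‖ := norm_pos_iff.mpr hvne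
    nlinarith
  constructor
  · have hkey : ∀ h : ℝ, 0 < h →
        (1 / h) *
            (W1 ((Measure.dirac xb).map (fun x => x + h • ξ x))
                ((Measure.dirac xb).map (fun x => x + h • ζ x)) -
              W1 (Measure.dirac xb) (Measure.dirac xb) -
              h * ⟪ξ xb - ζ xb, s 0⟫) = c := by
      intro h hh
      have m1 : Measurable (fun x : EuclideanSpace ℝ (Fin d) => x + h • ξ x) :=
        measurable_id.add (hξ.const_smul h)
      have m2 : Measurable (fun x : EuclideanSpace ℝ (Fin d) => x + h • ζ x) :=
        measurable_id.add (hζ.const_smul h)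
      rw [Measure.map_dirac' m1, Measure.map_dirac' m2, W1_dirac, W1_dirac]
      have : dist (xb + h • ξ xb) (xb + h • ζ xb) = h * ‖v‖ := by
        rw [dist_eq_norm]
        have : xb + h • ξ xb - (xb + h • ζ xb) = h • v := by
          rw [hv]; module
        rw [this, norm_smul, Real.norm_of_nonneg hh.le]
      rw [this, dist_self]
      have habs : ∀ I : ℝ, 1 / h * (h * ‖v‖ - 0 - h * I) = ‖v‖ - I := by
        intro I; field_simp; ring
      exact habs ⟪v, s 0⟫
    have hev : (fun h : ℝ =>
        (1 / h) *
            (W1 ((Measure.dirac xb).map (fun x => x + h • ξ x))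
                ((Measure.dirac xb).map (fun x => x + h • ζ x)) -
              W1 (Measure.dirac xb) (Measure.dirac xb) -
              h * ⟪ξ xb - ζ xb, s 0⟫)) =ᶠ[𝓝[>] (0 : ℝ)] (fun _ => c) := by
      filter_upwards [self_mem_nhdsWithin] with h hh
      exact hkey h hh
    rw [liminf_congr hev, liminf_const]
  · exact hpos
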